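/- For all integers 0 ≤ j ≤ k and every integer p, d_{k,j,p} = q^{(k(k+3) − j(j+3))/2 − p j(j+2)} · Σ_{l=0}^{k−j} (−1)^l q^{−p(l² + (2j+2)l) + l(l−1)/2} (1 − q^{2(l+j+1)}) (q;q)_{l+2j+1} / ((q;q)_{k+l+j+2} (q;q)_{k−l−j} (q;q)_l). -/
import Mathlib


open Finset

noncomputable section

/-- The field `F = ℚ(𝔮)` of rational functions over `ℚ` in an indeterminate `𝔮`. -/
abbrev F : Type := RatFunc ℚ

/-- The indeterminate `𝔮`. -/
noncomputable def qv : F := RatFunc.X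

/-- `{n} = 𝔮^n - 𝔮^{-n}` for `n : ℤ`. -/
def brc (n : ℤ) : F := qv ^ n - qv ^ (-n)

/-- `[n] = {n}/{1}`. -/
def brk (n : ℤ) : F := brc n / brc 1

/-- `{n}! = ∏_{j=1}^n {j}`. -/
def brcFac (n : ℕ) : F := ∏ j ∈ Finset.range n, brc ((j : ℤ) + 1)

/-- `[n]! = ∏_{j=1}^n [j]`. -/
def brkFac (n : ℕ) : F := ∏ j ∈ Finset.range n, brk ((j : ℤ) + 1)

/-- `q = 𝔮²`. -/
def qq : F := qv ^ 2

/-- The q-Pochhammer symbol `(x; q)_k = ∏_{j=0}^{k-1} (1 - x q^j)`. -/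
def poch (x : F) (k : ℕ) : F := ∏ j ∈ Finset.range k, (1 - x * qq ^ j)

/-- The q-binomial coefficient `[n choose i]_q`. -/
def qbinom (n i : ℕ) : F := poch qq n / (poch qq i * poch qq (n - i))

/-- `d_{k,j,p} = Σ_{i=j}^k (-1)^{i+j} 𝔮^{-2p i(i+2)} {2i+2} {i+1+j}! / ({k+i+2}! {k-i}! {i-j}!)`. -/
def dcoef (k j : ℕ) (p : ℤ) : F :=
  ∑ i ∈ Finset.Icc j k,
    (-1) ^ (i + j) * qv ^ (-2 * p * (i : ℤ) * ((i : ℤ) + 2)) * brc (2 * (i : ℤ) + 2) *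
        brcFac (i + 1 + j) /
      (brcFac (k + i + 2) * brcFac (k - i) * brcFac (i - j))

lemma qv_ne : qv ≠ 0 := RatFunc.X_ne_zero

lemma qq_pow_ne_one (n : ℕ) (hn : n ≠ 0) : qq ^ n ≠ 1 := by
  have : qq ^ n = algebraMap (Polynomial ℚ) F (Polynomial.X ^ (2*n)) := by
    simp [qq, qv, pow_mul, map_pow, RatFunc.algebraMap_X]
  rw [this]
  intro h
  have h1 : algebraMap (Polynomial ℚ) F (Polynomial.X ^ (2*n)) = algebraMap (Polynomial ℚ) F 1 := by
    simpa using h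
  have := IsFractionRing.injective (Polynomial ℚ) F h1
  have := congrArg Polynomial.natDegree this
  simp [Polynomial.natDegree_X_pow] at this
  omega

lemma poch_ne (n : ℕ) : poch qq n ≠ 0 := by
  rw [poch]
  apply Finset.prod_ne_zero_iff.mpr
  intro i _
  have : qq * qq ^ i = qq ^ (i+1) := by ring
  rw [this]
  intro h
  exact qq_pow_ne_one (i+1) (by omega) (by linear_combination -h)

lemma qq_zpow (z : ℤ) : qq ^ z = qv ^ (2*z) := by
  rw [qq, ← zpow_natCast qv 2, ← zpow_mul]; norm_num

lemma qq_npow (n : ℕ) : qq ^ n = qv ^ ((2*n : ℤ)) := by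
  rw [← zpow_natCast qq n, qq_zpow]

lemma brc_nat (n : ℕ) : brc ((n : ℕ) : ℤ) = -(qv ^ (-(n:ℤ)) * (1 - qq ^ n)) := by
  rw [brc, qq_npow]
  have h : qv ^ (-(n:ℤ)) * qv ^ (((n:ℤ)) * 2) = qv ^ (n:ℤ) := by
    rw [← zpow_add₀ qv_ne]; ring_nf
  ring_nf
  rw [h]
  ring

lemma poch_succ (n : ℕ) : poch qq (n+1) = poch qq n * (1 - qq ^ (n+1)) := by
  rw [poch, poch, Finset.prod_range_succ, ← pow_succ']

lemma brcFac_eq (n : ℕ) :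
    brcFac n = (-1)^n * qv ^ (-((n*(n+1)/2 : ℕ):ℤ)) * poch qq n := by
  induction n with
  | zero => simp [brcFac, poch]
  | succ n ih =>
    rw [brcFac, Finset.prod_range_succ, ← brcFac, ih, poch_succ]
    have hn : (n : ℤ) + 1 = ((n+1 : ℕ) : ℤ) := by push_cast; ring
    rw [hn, brc_nat]
    have h2 : ((n+1)*(n+2)/2 : ℕ) = (n*(n+1)/2 : ℕ) + (n+1) := by
      rcases Nat.even_or_odd n with h | h <;> [rcases h with ⟨m, hm⟩; rcases h with ⟨m, hm⟩] <;>
        subst hm <;> ring_nf <;> omega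
    have : (-(((n+1)*((n+1)+1)/2 : ℕ):ℤ)) = -((n*(n+1)/2 : ℕ):ℤ) + (-((n+1 : ℕ):ℤ)) := by
      push_cast [h2]; ring
    rw [this, zpow_add₀ qv_ne]
    ring

lemma key (s0 n1 n2 n3 n4 l : ℕ) (a0 a1 b1 b2 b3 b4 c1 c2 : ℤ) (G P1 P2 P3 P4 : F)
    (hP2 : P2 ≠ 0) (hP3 : P3 ≠ 0) (hP4 : P4 ≠ 0)
    (hs : (s0 + n1 + 1) % 2 = (l + n2 + n3 + n4) % 2)
    (he : a0 + a1 + b1 - b2 - b3 - b4 = c1 + c2) :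
    (-1:F)^s0 * qv ^ a0 * (-(qv ^ a1 * G)) * ((-1:F)^n1 * qv ^ b1 * P1) /
      ((-1:F)^n2 * qv ^ b2 * P2 * ((-1:F)^n3 * qv ^ b3 * P3) * ((-1:F)^n4 * qv ^ b4 * P4))
    = qv ^ c1 * ((-1:F)^l * qv ^ c2 * G * P1 / (P2 * P3 * P4)) := by
  have hqv := qv_ne
  have h1 : qv ^ a0 * qv ^ a1 * qv ^ b1
      = qv ^ c1 * qv ^ c2 * qv ^ b2 * qv ^ b3 * qv ^ b4 := by
    rw [← zpow_add₀ hqv, ← zpow_add₀ hqv, ← zpow_add₀ hqv, ← zpow_add₀ hqv,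
      ← zpow_add₀ hqv, ← zpow_add₀ hqv]
    congr 1
    omega
  have h2 : (-1:F)^(s0+n1+1) = (-1:F)^(l+n2+n3+n4) := by
    rw [neg_one_pow_eq_pow_mod_two, hs, ← neg_one_pow_eq_pow_mod_two]
  have h3 : (-1:F)^(s0+n1+1) * (qv ^ a0 * qv ^ a1 * qv ^ b1)
      = (-1:F)^(l+n2+n3+n4) * (qv ^ c1 * qv ^ c2 * qv ^ b2 * qv ^ b3 * qv ^ b4) := by
    rw [h2, h1]
  have hD : (-1:F)^n2 * qv ^ b2 * P2 * ((-1:F)^n3 * qv ^ b3 * P3) * ((-1:F)^n4 * qv ^ b4 * P4) ≠ 0 := by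
    apply mul_ne_zero
    apply mul_ne_zero
    all_goals
      apply mul_ne_zero
      apply mul_ne_zero
      all_goals first
        | exact pow_ne_zero _ (neg_ne_zero.mpr one_ne_zero)
        | exact zpow_ne_zero _ hqv
        | assumption
  have hD' : P2 * P3 * P4 ≠ 0 := mul_ne_zero (mul_ne_zero hP2 hP3) hP4
  rw [← mul_div_assoc, div_eq_div_iff hD hD']
  linear_combination (G * P1 * P2 * P3 * P4) * h3

lemma cd1 (m : ℕ) : ((m*(m+1)/2 : ℕ):ℤ)*2 = (m:ℤ)*((m:ℤ)+1) := by
  have h : (m*(m+1)/2)*2 = m*(m+1) := Nat.div_mul_cancel (Nat.even_mul_succ_self m).two_dvd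
  exact_mod_cast congrArg (Nat.cast (R := ℤ)) h

lemma cd2 (m : ℕ) : ((m*(m+3)/2 : ℕ):ℤ)*2 = (m:ℤ)*((m:ℤ)+3) := by
  have hd : 2 ∣ m*(m+3) := by
    rcases Nat.even_or_odd m with ⟨t, rfl⟩ | h
    · exact ⟨t*(t+t+3), by ring⟩
    · obtain ⟨t, rfl⟩ := h
      exact ⟨(2*t+1)*(t+2), by ring⟩
  have h : (m*(m+3)/2)*2 = m*(m+3) := Nat.div_mul_cancel hd
  exact_mod_cast congrArg (Nat.cast (R := ℤ)) h

lemma cd3 (m : ℕ) : ((m*(m-1)/2 : ℕ):ℤ)*2 = (m:ℤ)*((m:ℤ)-1) := by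
  cases m with
  | zero => simp
  | succ n =>
    have hd : 2 ∣ (n+1)*n := (mul_comm n (n+1)) ▸ (Nat.even_mul_succ_self n).two_dvd
    have h : ((n+1)*n/2)*2 = (n+1)*n := Nat.div_mul_cancel hd
    have h2 : ((((n+1)*n/2 : ℕ)):ℤ)*2 = (((n+1)*n : ℕ):ℤ) := by exact_mod_cast congrArg (Nat.cast (R := ℤ)) h
    show ((((n+1)*n/2 : ℕ)):ℤ)*2 = ((n+1 : ℕ):ℤ)*(((n+1 : ℕ):ℤ)-1)
    rw [h2]
    push_cast
    ring

/-- Rewriting `d_{k,j,p}` via q-Pochhammer symbols. -/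
theorem stmt18 (j k : ℕ) (hjk : j ≤ k) (p : ℤ) :
    dcoef k j p = qq ^ (((k * (k + 3) / 2 : ℕ) : ℤ) - ((j * (j + 3) / 2 : ℕ) : ℤ) -
        p * (j : ℤ) * ((j : ℤ) + 2)) *
      ∑ l ∈ Finset.range (k - j + 1),
        (-1) ^ l * qq ^ (-p * ((l : ℤ) ^ 2 + (2 * (j : ℤ) + 2) * (l : ℤ)) +
            ((l * (l - 1) / 2 : ℕ) : ℤ)) *
          (1 - qq ^ (2 * (l + j + 1))) * poch qq (l + 2 * j + 1) /
          (poch qq (k + l + j + 2) * poch qq (k - l - j) * poch qq l) := by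
  rw [dcoef, ← Finset.Ico_add_one_right_eq_Icc, Finset.sum_Ico_eq_sum_range, Finset.mul_sum,
    show k + 1 - j = k - j + 1 from by omega]
  refine Finset.sum_congr rfl fun l hl => ?_
  have hl' : l ≤ k - j := by have := Finset.mem_range.mp hl; omega
  rw [show j + l + 1 + j = l + 2*j + 1 from by omega,
    show k + (j + l) + 2 = k + l + j + 2 from by omega,
    show k - (j + l) = k - l - j from by omega,
    show j + l - j = l from by omega,
    show (2 * (((j + l : ℕ)) : ℤ) + 2) = (((2*(l+j+1) : ℕ)) : ℤ) from by push_cast; ring,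
    brc_nat]
  simp only [brcFac_eq]
  rw [qq_zpow, qq_zpow]
  refine key _ _ _ _ _ _ _ _ _ _ _ _ _ _ _ _ _ _ _ (poch_ne _) (poch_ne _) (poch_ne _) ?_ ?_
  · omega
  · have hsub : ((k - l - j : ℕ):ℤ) = (k:ℤ) - l - j := by omega
    have e1 := cd1 (l+2*j+1)
    have e2 := cd1 (k+l+j+2)
    have e3 := cd1 (k-l-j)
    have e4 := cd1 l
    have e5 := cd2 k
    have e6 := cd2 j
    have e7 := cd3 l
    rw [hsub] at e3
    push_cast at e1 e2 e3 e4 e5 e6 e7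
    refine mul_left_cancel₀ (two_ne_zero (α := ℤ)) ?_
    push_cast
    linear_combination -e1 + e2 + e3 + e4 - 2*e5 + 2*e6 - 2*e7
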